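/- (Lemma 2) Fix N ≥ 2 and subsets E, A ⊆ P. Suppose the kernel of the extended linear map T_{E,A} has dimension |E ∩ A| (equivalently, the rank of T_{E,A} equals (N − 1) + |E| + |A| − |E ∩ A|). Then for every δ : Fin N → ℝ with δ 0 = 0 and every e : P → ℝ supported on A with e p ≠ 0 for all p ∈ A, the equation system for (E, D δ + e) either has no solution, or A ⊆ E and its unique solution is (δ̂, ê) = (δ, e). -/

import Mathlib

abbrev Pair (N : ℕ) := {p : Fin N × Fin N // p.2 < p.1}

def Dmap {N : ℕ} (δ : Fin N → ℝ) : Pair N → ℝ := fun p => δ p.1.1 - δ p.1.2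

def ind {N : ℕ} (a : Pair N) : Pair N → ℝ := fun p => if p = a then 1 else 0

def IsSolution {N : ℕ} (hN : 0 < N) (E : Set (Pair N)) (b : Pair N → ℝ)
    (dh : Fin N → ℝ) (eh : Pair N → ℝ) : Prop :=
  dh ⟨0, hN⟩ = 0 ∧ (∀ p ∉ E, eh p = 0) ∧ ∀ p, Dmap dh p + eh p = b p

/-- The ambient linear map `(dh, eh, e') ↦ D dh + eh - e'`. -/
def Lfull (N : ℕ) : ((Fin N → ℝ) × (Pair N → ℝ) × (Pair N → ℝ)) →ₗ[ℝ] (Pair N → ℝ) where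
  toFun x := fun p => (x.1 p.1.1 - x.1 p.1.2) + x.2.1 p - x.2.2 p
  map_add' x y := by funext p; simp; ring
  map_smul' c x := by funext p; simp; ring

/-- The domain of the extended (re-vectorized) map: triples `(dh, eh, e')` with
`dh 0 = 0`, `eh` supported on `E`, `e'` supported on `A`. -/
noncomputable def Dom {N : ℕ} (hN : 0 < N) (E A : Set (Pair N)) :
    Submodule ℝ ((Fin N → ℝ) × (Pair N → ℝ) × (Pair N → ℝ)) where
  carrier := {x | x.1 ⟨0, hN⟩ = 0 ∧ (∀ p ∉ E, x.2.1 p = 0) ∧ (∀ p ∉ A, x.2.2 p = 0)}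
  add_mem' := by
    rintro a b ⟨ha0, ha1, ha2⟩ ⟨hb0, hb1, hb2⟩
    refine ⟨by simp [ha0, hb0], fun p hp => by simp [ha1 p hp, hb1 p hp],
      fun p hp => by simp [ha2 p hp, hb2 p hp]⟩
  zero_mem' := ⟨rfl, fun p _ => rfl, fun p _ => rfl⟩
  smul_mem' := by
    rintro c a ⟨ha0, ha1, ha2⟩
    refine ⟨by simp [ha0], fun p hp => by simp [ha1 p hp], fun p hp => by simp [ha2 p hp]⟩

/-- The extended (re-vectorized) linear map `T_{E,A} (dh, eh, e') = D dh + eh - e'`. -/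
noncomputable def Tmap {N : ℕ} (hN : 0 < N) (E A : Set (Pair N)) :
    Dom hN E A →ₗ[ℝ] (Pair N → ℝ) := (Lfull N).comp (Dom hN E A).subtype


open Classical in
noncomputable def extendFun {N : ℕ} (S : Set (Pair N)) (v : ↥S → ℝ) : Pair N → ℝ :=
  fun p => if h : p ∈ S then v ⟨p, h⟩ else 0

lemma extendFun_of_not_mem {N : ℕ} {S : Set (Pair N)} (v : ↥S → ℝ) {p : Pair N}
    (hp : p ∉ S) : extendFun S v p = 0 := dif_neg hp

lemma extendFun_of_mem {N : ℕ} {S : Set (Pair N)} (v : ↥S → ℝ) {p : Pair N}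
    (hp : p ∈ S) : extendFun S v p = v ⟨p, hp⟩ := dif_pos hp

noncomputable def psi {N : ℕ} (hN : 0 < N) (E A : Set (Pair N)) :
    (↥(E ∩ A) → ℝ) →ₗ[ℝ] LinearMap.ker (Tmap hN E A) where
  toFun v := ⟨⟨(0, extendFun _ v, extendFun _ v),
      ⟨rfl, fun p hp => extendFun_of_not_mem v (fun h => hp h.1),
        fun p hp => extendFun_of_not_mem v (fun h => hp h.2)⟩⟩, by
    simp only [LinearMap.mem_ker]
    show Lfull N _ = 0
    funext p
    show ((0:ℝ) - 0) + extendFun _ v p - extendFun _ v p = 0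
    ring⟩
  map_add' x y := by
    apply Subtype.ext; apply Subtype.ext
    refine Prod.ext (by simp) (Prod.ext ?_ ?_) <;>
    · funext p
      show extendFun (E ∩ A) (x + y) p = extendFun (E ∩ A) x p + extendFun (E ∩ A) y p
      by_cases h : p ∈ E ∩ A
      · simp [extendFun_of_mem _ h]
      · simp [extendFun_of_not_mem _ h]
  map_smul' c x := by
    apply Subtype.ext; apply Subtype.ext
    refine Prod.ext (by simp) (Prod.ext ?_ ?_) <;>
    · funext p
      show extendFun (E ∩ A) (c • x) p = c * extendFun (E ∩ A) x p
      by_cases h : p ∈ E ∩ A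
      · simp [extendFun_of_mem _ h]
      · simp [extendFun_of_not_mem _ h]

lemma psi_inj {N : ℕ} (hN : 0 < N) (E A : Set (Pair N)) :
    Function.Injective (psi hN E A) := by
  rw [injective_iff_map_eq_zero]
  intro v hv
  funext q
  have h2 : ((psi hN E A v : Dom hN E A) :
      (Fin N → ℝ) × (Pair N → ℝ) × (Pair N → ℝ)).2.1 q.1 = 0 := by rw [hv]; rfl
  have h3 : ((psi hN E A v : Dom hN E A) :
      (Fin N → ℝ) × (Pair N → ℝ) × (Pair N → ℝ)).2.1 q.1 = v q := by
    show extendFun (E ∩ A) v q.1 = v q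
    rw [extendFun_of_mem v q.2]
  rw [h3] at h2
  exact h2

lemma ker_struct {N : ℕ} (hN : 0 < N) (E A : Set (Pair N))
    (hker : Module.finrank ℝ (LinearMap.ker (Tmap hN E A)) = (E ∩ A).ncard)
    (x : Dom hN E A) (hx : Tmap hN E A x = 0) :
    (x : (Fin N → ℝ) × (Pair N → ℝ) × (Pair N → ℝ)).1 = 0 ∧
    (x : (Fin N → ℝ) × (Pair N → ℝ) × (Pair N → ℝ)).2.1 =
      (x : (Fin N → ℝ) × (Pair N → ℝ) × (Pair N → ℝ)).2.2 := by
  haveI : Fintype ↥(E ∩ A) := Fintype.ofFinite _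
  have hdim : Module.finrank ℝ (↥(E ∩ A) → ℝ)
      = Module.finrank ℝ (LinearMap.ker (Tmap hN E A)) := by
    rw [hker, Module.finrank_pi, ← Nat.card_coe_set_eq, Nat.card_eq_fintype_card]
  have hsurj : Function.Surjective (psi hN E A) :=
    (LinearMap.injective_iff_surjective_of_finrank_eq_finrank (K := ℝ) (V := ↥(E ∩ A) → ℝ) (V₂ := LinearMap.ker (Tmap hN E A)) hdim (f := psi hN E A)).mp (psi_inj hN E A)
  obtain ⟨v, hv⟩ := hsurj ⟨x, hx⟩
  have h1 : (x : (Fin N → ℝ) × (Pair N → ℝ) × (Pair N → ℝ)) =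
      (0, extendFun _ v, extendFun _ v) := by
    rw [show x = (⟨x, hx⟩ : LinearMap.ker (Tmap hN E A)).1 from rfl, ← hv]; rfl
  rw [h1]
  exact ⟨rfl, rfl⟩

/-- Lemma 2: if the kernel of the extended linear map `T_{E,A}` has dimension `|E ∩ A|`,
then for every `δ` with `δ 0 = 0` and every fault vector `e` supported on `A` with
`e p ≠ 0` for all `p ∈ A`, the equation system for `(E, D δ + e)` either has no
solution, or `A ⊆ E` and its unique solution is `(δ, e)`. -/
theorem stmt_11 {N : ℕ} (hN : 2 ≤ N) (E A : Set (Pair N))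
    (hker : Module.finrank ℝ
        (LinearMap.ker (Tmap (show 0 < N by omega) E A)) = (E ∩ A).ncard)
    (δ : Fin N → ℝ) (hδ : δ ⟨0, by omega⟩ = 0)
    (e : Pair N → ℝ) (he : ∀ p ∉ A, e p = 0) (hA : ∀ p ∈ A, e p ≠ 0) :
    (¬ ∃ (dh : Fin N → ℝ) (eh : Pair N → ℝ),
        IsSolution (show 0 < N by omega) E (fun p => Dmap δ p + e p) dh eh) ∨
    (A ⊆ E ∧ ∀ (dh : Fin N → ℝ) (eh : Pair N → ℝ),
        IsSolution (show 0 < N by omega) E (fun p => Dmap δ p + e p) dh eh ↔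
          dh = δ ∧ eh = e) := by
  have hN0 : 0 < N := by omega
  -- key: any solution equals (δ, e)
  have key : ∀ (dh : Fin N → ℝ) (eh : Pair N → ℝ),
      IsSolution hN0 E (fun p => Dmap δ p + e p) dh eh → dh = δ ∧ eh = e := by
    intro dh eh ⟨hd0, hehE, heq⟩
    set x : (Fin N → ℝ) × (Pair N → ℝ) × (Pair N → ℝ) := (dh - δ, eh, e) with hxdef
    have hxm : x ∈ Dom hN0 E A := by
      refine ⟨by simp [hxdef, hd0, hδ], fun p hp => hehE p hp, fun p hp => he p hp⟩
    have hx0 : Tmap hN0 E A ⟨x, hxm⟩ = 0 := by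
      funext p
      show ((dh - δ) p.1.1 - (dh - δ) p.1.2) + eh p - e p = 0
      have := heq p
      simp only [Dmap] at this ⊢
      simp only [Pi.sub_apply]
      linarith
    obtain ⟨h1, h2⟩ := ker_struct hN0 E A hker ⟨x, hxm⟩ hx0
    constructor
    · have : dh - δ = 0 := h1
      funext i; have := congrFun this i; simp at this; linarith [congrFun (sub_eq_zero.mp (by funext j; exact congrFun (h1 : dh - δ = 0) j) : dh = δ) i]
    · exact h2
  by_cases hsol : ∃ (dh : Fin N → ℝ) (eh : Pair N → ℝ),
      IsSolution hN0 E (fun p => Dmap δ p + e p) dh eh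
  · right
    obtain ⟨dh, eh, hs⟩ := hsol
    obtain ⟨hdh, heh⟩ := key dh eh hs
    have hAE : A ⊆ E := by
      intro p hp
      by_contra hpE
      exact hA p hp (heh ▸ hs.2.1 p hpE)
    refine ⟨hAE, fun dh' eh' => ⟨key dh' eh', ?_⟩⟩
    rintro ⟨rfl, rfl⟩
    exact ⟨hδ, fun p hp => he p (fun h => hp (hAE h)), fun p => rfl⟩
  · exact Or.inl hsol
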